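/- Let ψ : ℕ → (0,1] be non-increasing with φ(q) := q ψ(q) ≤ 1, and suppose k ≥ 2, 0 < s ≤ k, α ∈ W(l,ψ), and liminf_{q→∞} q^{k−s} φ(q)^s > 0. Then, with ψ_α(q) := ψ(q) if max_i ‖qα_i‖ < φ(q) and 0 otherwise, the set W(k, ψ_α^{s/k}) := {x ∈ [0,1]^k : max_j |x_j − p_j/q| < ψ_α(q)^{s/k} for infinitely many q, p ∈ ℤ^k} has full k-dimensional Lebesgue measure in [0,1]^k. -/

import Mathlib

open MeasureTheory Filter Set
open scoped ENNReal

noncomputable section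

/-- distance to the nearest integer -/
def nid (x : ℝ) : ℝ := |x - round x|

/-- membership in W(n,ψ): x ∈ [0,1]^n and max_i |x_i - p_i/q| < ψ q for infinitely many q. -/
def memW (n : ℕ) (ψ : ℕ → ℝ) (x : Fin n → ℝ) : Prop :=
  (∀ i, x i ∈ Set.Icc (0:ℝ) 1) ∧
  {q : ℕ | 0 < q ∧ ∃ p : Fin n → ℤ, ∀ i, |x i - (p i : ℝ) / (q : ℝ)| < ψ q}.Infinite

/-- membership in E(n,ψ) = W(n,ψ) \ ⋃_{0<c<1} W(n,cψ). -/
def memE (n : ℕ) (ψ : ℕ → ℝ) (x : Fin n → ℝ) : Prop :=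
  memW n ψ x ∧ ∀ c : ℝ, 0 < c → c < 1 → ¬ memW n (fun q => c * ψ q) x

/-- the fibre W(α, k, ψ) = {x : (α, x) ∈ W(l+k, ψ)}. -/
def fibW (l k : ℕ) (ψ : ℕ → ℝ) (α : Fin l → ℝ) : Set (Fin k → ℝ) :=
  {x | memW (l + k) ψ (Fin.append α x)}


set_option maxHeartbeats 1000000

lemma nid_le (y : ℝ) (p : ℤ) : nid y ≤ |y - p| := round_le y p

lemma nid_lt_iff {q : ℕ} (hq : 1 ≤ q) {δ x : ℝ} :
    nid ((q:ℝ) * x) < δ ↔ ∃ p : ℤ, x ∈ Ioo (((p:ℝ) - δ)/q) (((p:ℝ) + δ)/q) := by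
  have hq0 : (0:ℝ) < q := by exact_mod_cast hq
  constructor
  · intro h
    refine ⟨round ((q:ℝ)*x), ?_, ?_⟩
    · rw [div_lt_iff₀ hq0]
      have := abs_lt.1 (show |(q:ℝ)*x - round ((q:ℝ)*x)| < δ from h)
      linarith [this.1, this.2]
    · rw [lt_div_iff₀ hq0]
      have := abs_lt.1 (show |(q:ℝ)*x - round ((q:ℝ)*x)| < δ from h)
      linarith [this.1, this.2]
  · rintro ⟨p, h1, h2⟩
    rw [div_lt_iff₀ hq0] at h1
    rw [lt_div_iff₀ hq0] at h2
    calc nid ((q:ℝ)*x) ≤ |(q:ℝ)*x - p| := nid_le _ _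
    _ < δ := by rw [abs_lt]; constructor <;> nlinarith [mul_comm (q:ℝ) x]

lemma nid_set_eq {q : ℕ} (hq : 1 ≤ q) (δ : ℝ) :
    {x : ℝ | nid ((q:ℝ) * x) < δ} = ⋃ p : ℤ, Ioo (((p:ℝ) - δ)/q) (((p:ℝ) + δ)/q) := by
  ext x; simp [nid_lt_iff hq, mem_iUnion]

lemma nid_set_meas {q : ℕ} (hq : 1 ≤ q) (δ : ℝ) :
    MeasurableSet {x : ℝ | nid ((q:ℝ) * x) < δ} := by
  rw [nid_set_eq hq]; exact MeasurableSet.iUnion (fun p => measurableSet_Ioo)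

lemma nid_card_bound {q : ℕ} (hq : 1 ≤ q) {δ : ℝ} (hδ : 0 < δ) (hδ2 : δ ≤ 1/2)
    {c d : ℝ} (hcd : c ≤ d) :
    ((Finset.Icc ⌈(q:ℝ)*c - δ⌉ ⌊(q:ℝ)*d + δ⌋).card : ℝ) ≤ (q:ℝ)*(d-c) + 2 := by
  have hq0 : (0:ℝ) < q := by exact_mod_cast hq
  rw [Int.card_Icc]
  have h1 : (⌈(q:ℝ)*c - δ⌉ : ℝ) ≥ (q:ℝ)*c - δ := Int.le_ceil _
  have h2 : ((⌊(q:ℝ)*d + δ⌋ : ℤ) : ℝ) ≤ (q:ℝ)*d + δ := Int.floor_le _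
  by_cases hof : ⌊(q:ℝ)*d + δ⌋ + 1 - ⌈(q:ℝ)*c - δ⌉ ≤ 0
  · rw [Int.toNat_of_nonpos hof]; push_cast; nlinarith
  · push_neg at hof
    have hcast : (((⌊(q:ℝ)*d + δ⌋ + 1 - ⌈(q:ℝ)*c - δ⌉).toNat : ℝ))
        = ((⌊(q:ℝ)*d + δ⌋ : ℝ) + 1 - (⌈(q:ℝ)*c - δ⌉ : ℝ)) := by
      rw [show (((⌊(q:ℝ)*d + δ⌋ + 1 - ⌈(q:ℝ)*c - δ⌉).toNat : ℝ))
          = (((⌊(q:ℝ)*d + δ⌋ + 1 - ⌈(q:ℝ)*c - δ⌉).toNat : ℤ) : ℝ) from by push_cast; ring,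
        Int.toNat_of_nonneg hof.le]
      push_cast; ring
    rw [hcast]; nlinarith

lemma nid_cover {q : ℕ} (hq : 1 ≤ q) {δ : ℝ} (hδ : 0 < δ) (c d : ℝ) :
    {x : ℝ | nid ((q:ℝ) * x) < δ} ∩ Icc c d ⊆
      ⋃ p ∈ Finset.Icc ⌈(q:ℝ)*c - δ⌉ ⌊(q:ℝ)*d + δ⌋,
        Ioo (((p:ℝ) - δ)/q) (((p:ℝ) + δ)/q) := by
  have hq0 : (0:ℝ) < q := by exact_mod_cast hq
  rintro x ⟨hx, hc, hd⟩
  set p := round ((q:ℝ)*x) with hp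
  have habs := abs_lt.1 (show |(q:ℝ)*x - p| < δ from hx)
  refine mem_iUnion₂.2 ⟨p, ?_, ?_, ?_⟩
  · rw [Finset.mem_Icc]
    constructor
    · apply Int.ceil_le.2; nlinarith [habs.2]
    · apply Int.le_floor.2; nlinarith [habs.1]
  · rw [div_lt_iff₀ hq0]; linarith [habs.2]
  · rw [lt_div_iff₀ hq0]; linarith [habs.1]

lemma nid_vol_upper {q : ℕ} (hq : 1 ≤ q) {δ : ℝ} (hδ : 0 < δ) (hδ2 : δ ≤ 1/2)
    {c d : ℝ} (hcd : c ≤ d) :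
    volume ({x : ℝ | nid ((q:ℝ) * x) < δ} ∩ Icc c d)
      ≤ ENNReal.ofReal (2*δ*(d-c) + 4*δ/q) := by
  have hq0 : (0:ℝ) < q := by exact_mod_cast hq
  calc volume ({x : ℝ | nid ((q:ℝ) * x) < δ} ∩ Icc c d)
      ≤ volume (⋃ p ∈ Finset.Icc ⌈(q:ℝ)*c - δ⌉ ⌊(q:ℝ)*d + δ⌋,
          Ioo (((p:ℝ) - δ)/q) (((p:ℝ) + δ)/q)) := measure_mono (nid_cover hq hδ c d)
    _ ≤ ∑ p ∈ Finset.Icc ⌈(q:ℝ)*c - δ⌉ ⌊(q:ℝ)*d + δ⌋,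
          volume (Ioo (((p:ℝ) - δ)/q) (((p:ℝ) + δ)/q)) := measure_biUnion_finset_le _ _
    _ = ∑ p ∈ Finset.Icc ⌈(q:ℝ)*c - δ⌉ ⌊(q:ℝ)*d + δ⌋, ENNReal.ofReal (2*δ/q) := by
        refine Finset.sum_congr rfl (fun p _ => ?_)
        rw [Real.volume_Ioo]
        congr 1; field_simp; ring
    _ = (Finset.Icc ⌈(q:ℝ)*c - δ⌉ ⌊(q:ℝ)*d + δ⌋).card * ENNReal.ofReal (2*δ/q) := by
        rw [Finset.sum_const, nsmul_eq_mul]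
    _ ≤ ENNReal.ofReal ((q:ℝ)*(d-c) + 2) * ENNReal.ofReal (2*δ/q) := by
        gcongr
        rw [← ENNReal.ofReal_natCast]
        exact ENNReal.ofReal_le_ofReal (nid_card_bound hq hδ hδ2 hcd)
    _ = ENNReal.ofReal (((q:ℝ)*(d-c) + 2) * (2*δ/q)) := by
        rw [ENNReal.ofReal_mul (by nlinarith)]
    _ ≤ ENNReal.ofReal (2*δ*(d-c) + 4*δ/q) := by
        apply ENNReal.ofReal_le_ofReal
        apply le_of_eq
        field_simp
        ring

lemma nid_vol_pair {q r : ℕ} (hq : 1 ≤ q) (hqr : q ≤ r) {δ : ℝ} (hδ : 0 < δ) (hδ2 : δ ≤ 1/2) :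
    volume ({x : ℝ | nid ((q:ℝ) * x) < δ} ∩ {x : ℝ | nid ((r:ℝ) * x) < δ} ∩ Icc 0 1)
      ≤ ENNReal.ofReal (4*δ^2 + 8*δ^2/q + 12*δ*(q:ℝ)/r) := by
  have hq0 : (0:ℝ) < q := by exact_mod_cast hq
  have hr : 1 ≤ r := le_trans hq hqr
  have hr0 : (0:ℝ) < r := by exact_mod_cast hr
  have hsub : {x : ℝ | nid ((q:ℝ) * x) < δ} ∩ {x : ℝ | nid ((r:ℝ) * x) < δ} ∩ Icc 0 1 ⊆
      ⋃ p ∈ Finset.Icc ⌈(q:ℝ)*0 - δ⌉ ⌊(q:ℝ)*1 + δ⌋,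
        ({x : ℝ | nid ((r:ℝ) * x) < δ} ∩ Icc (((p:ℝ) - δ)/q) (((p:ℝ) + δ)/q)) := by
    rintro x ⟨⟨hxq, hxr⟩, hx01⟩
    have := nid_cover hq hδ 0 1 ⟨hxq, hx01⟩
    rw [mem_iUnion₂] at this
    obtain ⟨p, hp, hmem⟩ := this
    exact mem_iUnion₂.2 ⟨p, hp, hxr, Ioo_subset_Icc_self hmem⟩
  calc volume ({x : ℝ | nid ((q:ℝ) * x) < δ} ∩ {x : ℝ | nid ((r:ℝ) * x) < δ} ∩ Icc 0 1)
      ≤ ∑ p ∈ Finset.Icc ⌈(q:ℝ)*0 - δ⌉ ⌊(q:ℝ)*1 + δ⌋,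
          volume ({x : ℝ | nid ((r:ℝ) * x) < δ} ∩ Icc (((p:ℝ) - δ)/q) (((p:ℝ) + δ)/q)) :=
        le_trans (measure_mono hsub) (measure_biUnion_finset_le _ _)
    _ ≤ ∑ p ∈ Finset.Icc ⌈(q:ℝ)*0 - δ⌉ ⌊(q:ℝ)*1 + δ⌋,
          ENNReal.ofReal (2*δ*(2*δ/q) + 4*δ/r) := by
        refine Finset.sum_le_sum (fun p _ => ?_)
        have h1 : (((p:ℝ) - δ)/q) ≤ (((p:ℝ) + δ)/q) := by gcongr <;> linarith
        have := nid_vol_upper hr hδ hδ2 h1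
        refine le_trans this (ENNReal.ofReal_le_ofReal ?_)
        have : ((p:ℝ) + δ)/q - ((p:ℝ) - δ)/q = 2*δ/q := by field_simp; ring
        rw [this]
    _ = (Finset.Icc ⌈(q:ℝ)*0 - δ⌉ ⌊(q:ℝ)*1 + δ⌋).card * ENNReal.ofReal (2*δ*(2*δ/q) + 4*δ/r) := by
        rw [Finset.sum_const, nsmul_eq_mul]
    _ ≤ ENNReal.ofReal ((q:ℝ)*(1-0) + 2) * ENNReal.ofReal (2*δ*(2*δ/q) + 4*δ/r) := by
        gcongr
        rw [← ENNReal.ofReal_natCast]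
        exact ENNReal.ofReal_le_ofReal (nid_card_bound hq hδ hδ2 zero_le_one)
    _ = ENNReal.ofReal (((q:ℝ) + 2) * (2*δ*(2*δ/q) + 4*δ/r)) := by
        rw [← ENNReal.ofReal_mul (by positivity)]
        norm_num
    _ ≤ ENNReal.ofReal (4*δ^2 + 8*δ^2/q + 12*δ*(q:ℝ)/r) := by
        apply ENNReal.ofReal_le_ofReal
        have hq2 : (q:ℝ) + 2 ≤ 3*q := by
          have : (1:ℝ) ≤ q := by exact_mod_cast hq
          linarith
        have e1 : ((q:ℝ) + 2) * (2*δ*(2*δ/q) + 4*δ/r)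
            = 4*δ^2 + 8*δ^2/q + ((q:ℝ)+2)*(4*δ)/r := by field_simp; ring
        rw [e1]
        have : ((q:ℝ)+2)*(4*δ)/r ≤ 12*δ*(q:ℝ)/r := by
          have hmul := mul_le_mul_of_nonneg_right
            (show ((q:ℝ)+2)*(4*δ) ≤ 12*δ*q by nlinarith) (by positivity : (0:ℝ) ≤ (r:ℝ)⁻¹)
          simpa [div_eq_mul_inv] using hmul
        linarith

lemma nid_vol_lower {q : ℕ} (hq : 1 ≤ q) {δ : ℝ} (hδ : 0 < δ) (hδ2 : δ ≤ 1/2) :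
    ENNReal.ofReal (2*δ - 2*δ/q) ≤ volume ({x : ℝ | nid ((q:ℝ) * x) < δ} ∩ Icc 0 1) := by
  have hq0 : (0:ℝ) < q := by exact_mod_cast hq
  have hsub : (⋃ p ∈ Finset.Ico 1 q, Ioo ((((p:ℕ):ℝ) - δ)/q) ((((p:ℕ):ℝ) + δ)/q))
      ⊆ {x : ℝ | nid ((q:ℝ) * x) < δ} ∩ Icc 0 1 := by
    intro x hx
    rw [mem_iUnion₂] at hx
    obtain ⟨p, hp, hx1, hx2⟩ := hx
    rw [Finset.mem_Ico] at hp
    have hp1 : (1:ℝ) ≤ (p:ℕ) := by exact_mod_cast hp.1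
    have hpq : ((p:ℕ):ℝ) ≤ (q:ℝ) - 1 := by
      have : ((p:ℕ):ℝ) + 1 ≤ q := by exact_mod_cast hp.2
      linarith
    have hx1' : ((p:ℕ):ℝ) - δ < q*x := by rwa [div_lt_iff₀ hq0, mul_comm] at hx1
    have hx2' : (q:ℝ)*x < (p:ℕ) + δ := by rwa [lt_div_iff₀ hq0, mul_comm] at hx2
    refine ⟨?_, ?_, ?_⟩
    · calc nid ((q:ℝ)*x) ≤ |(q:ℝ)*x - (((p:ℕ):ℤ):ℝ)| := nid_le _ _
      _ < δ := by push_cast; rw [abs_lt]; constructor <;> linarith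
    · nlinarith
    · nlinarith
  refine le_trans ?_ (measure_mono hsub)
  rw [measure_biUnion_finset ?hd (fun p _ => measurableSet_Ioo)]
  · have hcong : ∀ p ∈ Finset.Ico 1 q, volume (Ioo ((((p:ℕ):ℝ) - δ)/q) ((((p:ℕ):ℝ) + δ)/q))
        = ENNReal.ofReal (2*δ/q) := by
      intro p _
      rw [Real.volume_Ioo]; congr 1; field_simp; ring
    rw [Finset.sum_congr rfl hcong, Finset.sum_const, Nat.card_Ico, nsmul_eq_mul]
    rw [← ENNReal.ofReal_natCast, ← ENNReal.ofReal_mul (by positivity)]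
    apply ENNReal.ofReal_le_ofReal
    have hc : ((q - 1 : ℕ):ℝ) = (q:ℝ) - 1 := by
      have : (1:ℕ) ≤ q := hq
      push_cast [this]; ring
    rw [hc]
    apply le_of_eq
    field_simp
  case hd =>
    intro a ha b hb hab
    simp only [Finset.coe_Ico, mem_Ico] at ha hb
    have key : ∀ a b : ℕ, a < b →
        Disjoint (Ioo (((a:ℝ) - δ)/q) (((a:ℝ) + δ)/q)) (Ioo (((b:ℝ) - δ)/q) (((b:ℝ) + δ)/q)) := by
      intro a b h
      have hab' : ((a:ℝ)) + 1 ≤ (b:ℝ) := by exact_mod_cast h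
      apply Set.disjoint_left.2
      rintro x ⟨hx1, hx2⟩ ⟨hy1, hy2⟩
      rw [div_lt_iff₀ hq0] at hy1 hx1
      rw [lt_div_iff₀ hq0] at hx2 hy2
      linarith
    rcases lt_or_gt_of_ne hab with h | h
    · exact key a b h
    · exact (key b a h).symm

lemma chung_erdos {β : Type*} [MeasurableSpace β] (μ : Measure β) (F : Finset ℕ)
    (A : ℕ → Set β) (hm : ∀ i, MeasurableSet (A i)) :
    (∑ i ∈ F, μ (A i))^2 ≤ μ (⋃ i ∈ F, A i) * ∑ i ∈ F, ∑ j ∈ F, μ (A i ∩ A j) := by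
  classical
  set f : β → ℝ≥0∞ := fun x => ∑ i ∈ F, (A i).indicator 1 x with hf
  have hmf : Measurable f := by
    apply Finset.measurable_sum
    exact fun i _ => (measurable_one.indicator (hm i))
  set U : Set β := ⋃ i ∈ F, A i with hU
  have hmU : MeasurableSet U := MeasurableSet.biUnion (Finset.countable_toSet F) (fun i _ => hm i)
  have hfU : ∀ x, f x = U.indicator (1 : β → ℝ≥0∞) x * f x := by
    intro x
    by_cases hx : x ∈ U
    · rw [Set.indicator_of_mem hx]; simp
    · rw [Set.indicator_of_notMem hx, zero_mul, hf]
      apply Finset.sum_eq_zero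
      intro i hi
      apply Set.indicator_of_notMem
      exact fun hxi => hx (mem_biUnion hi hxi)
  have hS : ∫⁻ x, f x ∂μ = ∑ i ∈ F, μ (A i) := by
    rw [hf, lintegral_finset_sum _ (fun i _ => measurable_one.indicator (hm i))]
    exact Finset.sum_congr rfl (fun i _ => lintegral_indicator_one (hm i))
  have hD : ∫⁻ x, (f x) * (f x) ∂μ = ∑ i ∈ F, ∑ j ∈ F, μ (A i ∩ A j) := by
    have hpt : ∀ x, f x * f x = ∑ i ∈ F, ∑ j ∈ F, (A i ∩ A j).indicator (1 : β → ℝ≥0∞) x := by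
      intro x
      rw [hf, Finset.sum_mul_sum]
      refine Finset.sum_congr rfl (fun i _ => Finset.sum_congr rfl (fun j _ => ?_))
      rw [Set.inter_indicator_one]
      rfl
    calc ∫⁻ x, (f x) * (f x) ∂μ
        = ∫⁻ x, ∑ i ∈ F, ∑ j ∈ F, (A i ∩ A j).indicator (1 : β → ℝ≥0∞) x ∂μ := by
          exact lintegral_congr (fun x => hpt x)
      _ = ∑ i ∈ F, ∑ j ∈ F, μ (A i ∩ A j) := by
          rw [lintegral_finset_sum _ (fun i _ => Finset.measurable_sum _
            (fun j _ => measurable_one.indicator ((hm i).inter (hm j))))]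
          refine Finset.sum_congr rfl (fun i _ => ?_)
          rw [lintegral_finset_sum _ (fun j _ => measurable_one.indicator ((hm i).inter (hm j)))]
          exact Finset.sum_congr rfl (fun j _ => lintegral_indicator_one ((hm i).inter (hm j)))
  -- Cauchy-Schwarz
  have hconj : (2:ℝ).HolderConjugate 2 := Real.HolderConjugate.two_two
  have hCS := ENNReal.lintegral_mul_le_Lp_mul_Lq μ hconj
    (measurable_one.indicator hmU).aemeasurable hmf.aemeasurable
  have hindpow : ∀ x, (U.indicator (1 : β → ℝ≥0∞) x) ^ (2:ℝ) = U.indicator 1 x := by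
    intro x
    by_cases hx : x ∈ U
    · rw [Set.indicator_of_mem hx]; simp [ENNReal.one_rpow]
    · rw [Set.indicator_of_notMem hx]; simp [ENNReal.zero_rpow_of_pos]
  have hfpow : ∀ x, (f x) ^ (2:ℝ) = f x * f x := by
    intro x
    rw [show (2:ℝ) = ((2:ℕ):ℝ) by norm_num, ENNReal.rpow_natCast, sq]
  have h1 : ∫⁻ x, (U.indicator (1 : β → ℝ≥0∞) x) ^ (2:ℝ) ∂μ = μ U := by
    rw [lintegral_congr hindpow, lintegral_indicator_one hmU]
  have h2 : ∫⁻ x, (f x) ^ (2:ℝ) ∂μ = ∑ i ∈ F, ∑ j ∈ F, μ (A i ∩ A j) := by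
    rw [lintegral_congr hfpow, hD]
  have hmain : ∑ i ∈ F, μ (A i) ≤
      (μ U) ^ (1/2:ℝ) * (∑ i ∈ F, ∑ j ∈ F, μ (A i ∩ A j)) ^ (1/2:ℝ) := by
    rw [← hS, ← h1, ← h2]
    calc ∫⁻ x, f x ∂μ = ∫⁻ x, (U.indicator (1 : β → ℝ≥0∞) * f) x ∂μ := lintegral_congr (fun x => hfU x)
      _ ≤ _ := hCS
  calc (∑ i ∈ F, μ (A i))^2
      ≤ ((μ U) ^ (1/2:ℝ) * (∑ i ∈ F, ∑ j ∈ F, μ (A i ∩ A j)) ^ (1/2:ℝ))^2 := by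
        exact pow_le_pow_left' hmain 2
    _ = μ U * ∑ i ∈ F, ∑ j ∈ F, μ (A i ∩ A j) := by
        rw [mul_pow]
        congr 1 <;>
        · rw [← ENNReal.rpow_natCast (_ ^ (1/2:ℝ)) 2, ← ENNReal.rpow_mul]
          norm_num

lemma pow_perturb (k : ℕ) {x y e : ℝ} (hx : 0 ≤ x) (hx1 : x ≤ 1) (hy : 0 ≤ y) (hy1 : y ≤ 1)
    (he : 0 ≤ e) (h : x ≤ y + e) : x^k ≤ y^k + k*e := by
  induction k with
  | zero => simp
  | succ n ih =>
    have hyn : y^n ≤ 1 := pow_le_one₀ hy hy1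
    have hxn : (0:ℝ) ≤ x^n := pow_nonneg hx n
    have hyn0 : (0:ℝ) ≤ y^n := pow_nonneg hy n
    calc x^(n+1) = x^n * x := by ring
      _ ≤ (y^n + n*e) * x := by nlinarith
      _ = y^n * x + n*e*x := by ring
      _ ≤ y^n * (y + e) + n*e := by
          nlinarith [mul_le_mul_of_nonneg_left h hyn0,
            mul_le_of_le_one_right (mul_nonneg (Nat.cast_nonneg n) he) hx1]
      _ = y^(n+1) + (y^n * e + n*e) := by ring
      _ ≤ y^(n+1) + (n+1)*e := by nlinarith
      _ = y^(n+1) + (↑(n+1))*e := by push_cast; ring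

lemma quad_tendsto {A B C : ℝ} (hA : 0 < A) :
    Tendsto (fun N : ℕ => A*(N:ℝ)^2 + B*(N:ℝ) + C) atTop atTop := by
  have h1 : Tendsto (fun N : ℕ => (N:ℝ)) atTop atTop := tendsto_natCast_atTop_atTop
  have h2 : Tendsto (fun N : ℕ => A*(N:ℝ) + B) atTop atTop :=
    tendsto_atTop_add_const_right _ B (h1.const_mul_atTop hA)
  have h3 : Tendsto (fun N : ℕ => (N:ℝ) * (A*(N:ℝ) + B)) atTop atTop := h1.atTop_mul_atTop₀ h2
  have h4 := tendsto_atTop_add_const_right _ C h3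
  exact h4.congr (fun N => by ring)

lemma core (k : ℕ) (hk : 1 ≤ k) {δ : ℝ} (hδ : 0 < δ) (hδ2 : δ ≤ 1/2) (u : ℕ → ℕ)
    (hu1 : ∀ n, 1 ≤ u n) (hu2 : ∀ n, (2:ℝ)^n ≤ (u n : ℝ))
    (hu4 : ∀ i j, i < j → (u i : ℝ) * 2^j ≤ (u j : ℝ)) :
    volume (⋂ m, ⋃ n, ⋃ (_ : m ≤ n),
      Set.pi univ (fun _ : Fin k => {x : ℝ | nid ((u n:ℝ) * x) < δ} ∩ Icc 0 1)) = 1 := by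
  classical
  set T : ℕ → Set ℝ := fun n => {x : ℝ | nid ((u n:ℝ) * x) < δ} ∩ Icc 0 1 with hT
  set A : ℕ → Set (Fin k → ℝ) := fun n => Set.pi univ (fun _ : Fin k => T n) with hA
  have hmT : ∀ n, MeasurableSet (T n) := fun n => (nid_set_meas (hu1 n) δ).inter measurableSet_Icc
  have hmA : ∀ n, MeasurableSet (A n) := fun n => MeasurableSet.univ_pi (fun _ => hmT n)
  set box : Set (Fin k → ℝ) := Set.pi univ (fun _ : Fin k => Icc (0:ℝ) 1) with hbox
  have hmbox : MeasurableSet box := MeasurableSet.univ_pi (fun _ => measurableSet_Icc)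
  have hvbox : volume box = 1 := by
    rw [hbox, volume_pi_pi]
    simp [Real.volume_Icc]
  have hAbox : ∀ n, A n ⊆ box := fun n =>
    Set.pi_mono (fun i _ => inter_subset_right)
  have humono : ∀ i j, i < j → u i ≤ u j := by
    intro i j hij
    have h2 : (1:ℝ) ≤ 2^j := one_le_pow₀ (by norm_num)
    have h4 := hu4 i j hij
    have hpos : (0:ℝ) < (u i : ℝ) := by exact_mod_cast hu1 i
    have : (u i : ℝ) ≤ u j := by nlinarith
    exact_mod_cast this
  -- volume identities
  have hvA : ∀ n, volume (A n) = (volume (T n))^k := by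
    intro n
    rw [hA, volume_pi_pi]
    simp [Finset.prod_const]
  have hvAij : ∀ i j, volume (A i ∩ A j) = (volume (T i ∩ T j))^k := by
    intro i j
    rw [hA, ← Set.pi_inter_distrib, volume_pi_pi]
    simp [Finset.prod_const]
  have hvT1 : ∀ n, volume (T n) ≤ 1 := by
    intro n
    calc volume (T n) ≤ volume (Icc (0:ℝ) 1) := measure_mono inter_subset_right
      _ = 1 := by simp [Real.volume_Icc]
  have hvTne : ∀ n, volume (T n) ≠ ⊤ := fun n => (lt_of_le_of_lt (hvT1 n) (by norm_num)).ne
  set v : ℕ → ℝ := fun n => (volume (T n)).toReal with hv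
  have hv0 : ∀ n, 0 ≤ v n := fun n => ENNReal.toReal_nonneg
  have hv1 : ∀ n, v n ≤ 1 := by
    intro n
    have := ENNReal.toReal_mono (by norm_num) (hvT1 n)
    simpa using this
  have hun_pos : ∀ n, (0:ℝ) < u n := fun n => by exact_mod_cast hu1 n
  have hrecip : ∀ n, 1/(u n : ℝ) ≤ (1/2)^n := by
    intro n
    rw [div_pow, one_pow]
    exact one_div_le_one_div_of_le (by positivity) (hu2 n)
  -- lower bound for v n
  have hv_lb : ∀ n, 2*δ - (1/2:ℝ)^n ≤ v n := by
    intro n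
    have h1 := nid_vol_lower (hu1 n) hδ hδ2
    have h2 : 2*δ - 2*δ/(u n : ℝ) ≤ v n := by
      rw [hv]
      refine (ENNReal.ofReal_le_iff_le_toReal (hvTne n)).1 ?_
      exact h1
    have h3 : 2*δ/(u n : ℝ) ≤ (1/2:ℝ)^n := by
      have := hrecip n
      have h2δ : 2*δ ≤ 1 := by linarith
      calc 2*δ/(u n : ℝ) = 2*δ * (1/(u n:ℝ)) := by ring
        _ ≤ 1 * (1/2:ℝ)^n := by
            apply mul_le_mul h2δ (hrecip n) (by positivity) (by norm_num)
        _ = (1/2:ℝ)^n := by ring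
    linarith
  set a : ℝ := (2*δ)^k with ha
  have ha0 : 0 < a := by positivity
  have ha1 : a ≤ 1 := pow_le_one₀ (by linarith) (by linarith)
  have htA_lb : ∀ n, a - k*(1/2:ℝ)^n ≤ (v n)^k := by
    intro n
    have := pow_perturb k (by linarith : (0:ℝ) ≤ 2*δ) (by linarith) (hv0 n) (hv1 n)
      (by positivity : (0:ℝ) ≤ (1/2:ℝ)^n) (by linarith [hv_lb n])
    linarith
  -- pair bounds
  set w : ℕ → ℕ → ℝ := fun i j => (volume (T i ∩ T j)).toReal with hw
  have hvTij : ∀ i j, volume (T i ∩ T j) ≤ 1 := fun i j =>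
    le_trans (measure_mono (inter_subset_left.trans inter_subset_right)) (by simp [Real.volume_Icc])
  have hvTijne : ∀ i j, volume (T i ∩ T j) ≠ ⊤ := fun i j =>
    (lt_of_le_of_lt (hvTij i j) (by norm_num)).ne
  have hw0 : ∀ i j, 0 ≤ w i j := fun i j => ENNReal.toReal_nonneg
  have hw1 : ∀ i j, w i j ≤ 1 := by
    intro i j
    have := ENNReal.toReal_mono (by norm_num) (hvTij i j)
    simpa using this
  have hwsym : ∀ i j, w i j = w j i := by intro i j; rw [hw]; simp [inter_comm]
  have hw_ub : ∀ i j, i < j → w i j ≤ 4*δ^2 + 8*(1/2:ℝ)^i + 12*(1/2:ℝ)^j := by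
    intro i j hij
    have hTrw : T i ∩ T j = {x : ℝ | nid ((u i:ℝ) * x) < δ} ∩ {x : ℝ | nid ((u j:ℝ) * x) < δ}
        ∩ Icc 0 1 := by
      rw [hT]; ext x; simp only [mem_inter_iff, mem_setOf_eq]; tauto
    have h1 := nid_vol_pair (hu1 i) (humono i j hij) hδ hδ2
    rw [← hTrw] at h1
    have h2 : w i j ≤ 4*δ^2 + 8*δ^2/(u i:ℝ) + 12*δ*(u i:ℝ)/(u j:ℝ) := by
      rw [hw]
      exact ENNReal.toReal_le_of_le_ofReal (by positivity) h1
    have h3 : 8*δ^2/(u i:ℝ) ≤ 8*(1/2:ℝ)^i := by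
      have hδ1 : δ^2 ≤ 1 := by nlinarith
      calc 8*δ^2/(u i:ℝ) = 8*δ^2 * (1/(u i:ℝ)) := by ring
        _ ≤ 8*1 * (1/2:ℝ)^i := by
            apply mul_le_mul (by nlinarith) (hrecip i) (by positivity) (by norm_num)
        _ = 8*(1/2:ℝ)^i := by ring
    have h4 : 12*δ*(u i:ℝ)/(u j:ℝ) ≤ 12*(1/2:ℝ)^j := by
      have hui : (0:ℝ) < u i := hun_pos i
      have huj : (0:ℝ) < u j := hun_pos j
      have hq : (u i:ℝ)/(u j:ℝ) ≤ (1/2:ℝ)^j := by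
        rw [div_le_iff₀ huj, div_pow, one_pow, div_mul_eq_mul_div, le_div_iff₀ (by positivity)]
        nlinarith [hu4 i j hij]
      calc 12*δ*(u i:ℝ)/(u j:ℝ) = 12*δ*((u i:ℝ)/(u j:ℝ)) := by ring
        _ ≤ 12*1*(1/2:ℝ)^j := by
            apply mul_le_mul (by nlinarith) hq (by positivity) (by norm_num)
        _ = 12*(1/2:ℝ)^j := by ring
    linarith
  set E : ℕ → ℕ → ℝ := fun i j => 12*((1/2:ℝ)^i + (1/2:ℝ)^j) with hE
  have hE0 : ∀ i j, 0 ≤ E i j := by intro i j; rw [hE]; positivity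
  have hwk : ∀ i j, i ≠ j → (w i j)^k ≤ a^2 + k * E i j := by
    intro i j hij
    have key : ∀ i j, i < j → (w i j)^k ≤ a^2 + k * E i j := by
      intro i j hij
      have h1 : w i j ≤ 4*δ^2 + E i j := by
        have := hw_ub i j hij
        rw [hE]; nlinarith [pow_nonneg (by norm_num : (0:ℝ) ≤ 1/2) i]
      have h2 := pow_perturb k (hw0 i j) (hw1 i j) (by positivity : (0:ℝ) ≤ 4*δ^2)
        (by nlinarith) (hE0 i j) h1
      have h3 : (4*δ^2)^k = a^2 := by
        rw [ha, ← pow_mul, show (4:ℝ)*δ^2 = (2*δ)^2 by ring, ← pow_mul, Nat.mul_comm]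
      linarith
    rcases lt_or_gt_of_ne hij with h | h
    · exact key i j h
    · have := key j i h
      rw [hwsym i j, show E i j = E j i by rw [hE]; ring]
      exact this
  
  -- each tail union has full measure
  have hBm : ∀ m : ℕ, volume (⋃ n, ⋃ (_ : m ≤ n), A n) = 1 := by
    intro m
    set B := ⋃ n, ⋃ (_ : m ≤ n), A n with hB
    have hBbox : B ⊆ box := iUnion₂_subset (fun n _ => hAbox n)
    have hBle : volume B ≤ 1 := hvbox ▸ measure_mono hBbox
    have hBfin : volume B ≠ ⊤ := (lt_of_le_of_lt hBle (by norm_num)).ne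
    have hvAfin : ∀ n, volume (A n) ≠ ⊤ := by
      intro n; rw [hvA n]
      exact (ENNReal.pow_lt_top (lt_of_le_of_lt (hvT1 n) (by norm_num))).ne
    have hvAijfin : ∀ i j, volume (A i ∩ A j) ≠ ⊤ := by
      intro i j; rw [hvAij i j]
      exact (ENNReal.pow_lt_top (lt_of_le_of_lt (hvTij i j) (by norm_num))).ne
    have hgeo : ∀ G : Finset ℕ, ∑ n ∈ G, (1/2:ℝ)^n ≤ 2 := by
      intro G
      obtain ⟨M, hM⟩ := G.exists_nat_subset_range
      calc ∑ n ∈ G, (1/2:ℝ)^n ≤ ∑ n ∈ Finset.range M, (1/2:ℝ)^n :=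
            Finset.sum_le_sum_of_subset_of_nonneg hM (fun i _ _ => by positivity)
        _ ≤ 2 := sum_geometric_two_le M
    have hmain : ∀ ε : ℝ, 0 < ε → ε < 1 → 1 - ε ≤ (volume B).toReal := by
      intro ε hε hε1
      set Cc : ℝ := 48*(k:ℝ) + 1 with hCc
      have hCc0 : 0 < Cc := by positivity
      obtain ⟨N, hN1, hN2⟩ : ∃ N : ℕ, (1-ε)*((N:ℝ)^2*a^2 + Cc*N) < ((N:ℝ)*a - 2*k)^2
          ∧ 2*(k:ℝ) + 1 ≤ (N:ℝ)*a := by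
        have hq := quad_tendsto (A := ε*a^2) (B := -(4*(k:ℝ)*a) - (1-ε)*Cc)
          (C := 4*(k:ℝ)^2) (by positivity)
        have h1 := hq.eventually_gt_atTop 0
        have hlin : Tendsto (fun N : ℕ => (N:ℝ)*a) atTop atTop :=
          Tendsto.atTop_mul_const ha0 tendsto_natCast_atTop_atTop
        have h2 := hlin.eventually_ge_atTop (2*(k:ℝ)+1)
        obtain ⟨N, hN1, hN2⟩ := (h1.and h2).exists
        refine ⟨N, by nlinarith [hN1], hN2⟩
      set F : Finset ℕ := Finset.Ico m (m+N) with hF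
      have hcard : F.card = N := by rw [hF, Nat.card_Ico]; omega
      set Sr : ℝ := ∑ n ∈ F, ((volume (A n)).toReal) with hSr
      set Dr : ℝ := ∑ i ∈ F, ∑ j ∈ F, ((volume (A i ∩ A j)).toReal) with hDr
      have hSr_lb : (N:ℝ)*a - 2*(k:ℝ) ≤ Sr := by
        have hterm : ∀ n ∈ F, a - (k:ℝ)*(1/2:ℝ)^n ≤ (volume (A n)).toReal := by
          intro n _
          rw [hvA n, ENNReal.toReal_pow]
          exact htA_lb n
        have hk0 : (0:ℝ) ≤ k := Nat.cast_nonneg k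
        calc (N:ℝ)*a - 2*(k:ℝ) ≤ ∑ n ∈ F, (a - (k:ℝ)*(1/2:ℝ)^n) := by
              rw [Finset.sum_sub_distrib, Finset.sum_const, hcard, ← Finset.mul_sum,
                nsmul_eq_mul]
              nlinarith [hgeo F]
          _ ≤ Sr := Finset.sum_le_sum hterm
      have hDr_ub : Dr ≤ (N:ℝ)^2*a^2 + Cc*N := by
        have hterm : ∀ i ∈ F, ∀ j ∈ F, (volume (A i ∩ A j)).toReal
            ≤ a^2 + (k:ℝ) * E i j + (if i = j then (1:ℝ) else 0) := by
          intro i _ j _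
          rw [hvAij i j, ENNReal.toReal_pow]
          show (w i j)^k ≤ _
          by_cases hij : i = j
          · subst hij
            simp only [eq_self_iff_true, if_true]
            have h1 : (w i i)^k ≤ 1 := pow_le_one₀ (hw0 i i) (hw1 i i)
            have h2 := hE0 i i
            have hk0 : (0:ℝ) ≤ k := Nat.cast_nonneg k
            nlinarith [mul_nonneg hk0 h2, sq_nonneg a]
          · simp only [if_neg hij, add_zero]
            exact hwk i j hij
        have hk0 : (0:ℝ) ≤ k := Nat.cast_nonneg k
        have hEsum : ∑ i ∈ F, ∑ j ∈ F, E i j ≤ 48*(N:ℝ) := by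
          have hinner : ∀ i ∈ F, ∑ j ∈ F, E i j ≤ 12*((N:ℝ)*(1/2:ℝ)^i + 2) := by
            intro i _
            rw [hE]
            rw [← Finset.mul_sum, Finset.sum_add_distrib, Finset.sum_const, hcard,
              nsmul_eq_mul]
            nlinarith [hgeo F]
          calc ∑ i ∈ F, ∑ j ∈ F, E i j ≤ ∑ i ∈ F, 12*((N:ℝ)*(1/2:ℝ)^i + 2) :=
                Finset.sum_le_sum hinner
            _ = 12*(N:ℝ)*(∑ i ∈ F, (1/2:ℝ)^i) + 24*N := by
                have hring : ∀ i : ℕ, 12*((N:ℝ)*(1/2:ℝ)^i + 2) = 12*(N:ℝ)*(1/2:ℝ)^i + 24 :=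
                  fun i => by ring
                simp_rw [hring]
                rw [Finset.sum_add_distrib, ← Finset.mul_sum, Finset.sum_const, hcard,
                  nsmul_eq_mul]
                ring
            _ ≤ 48*(N:ℝ) := by nlinarith [hgeo F, Nat.cast_nonneg (α := ℝ) N,
                Finset.sum_nonneg (fun i (_ : i ∈ F) => by positivity : ∀ i ∈ F, (0:ℝ) ≤ (1/2:ℝ)^i)]
        calc Dr ≤ ∑ i ∈ F, ∑ j ∈ F, (a^2 + (k:ℝ)*E i j + (if i = j then (1:ℝ) else 0)) := by
              exact Finset.sum_le_sum (fun i hi => Finset.sum_le_sum (fun j hj => hterm i hi j hj))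
          _ = (N:ℝ)^2*a^2 + (k:ℝ)*(∑ i ∈ F, ∑ j ∈ F, E i j)
                + ∑ i ∈ F, ∑ j ∈ F, (if i = j then (1:ℝ) else 0) := by
              simp_rw [Finset.sum_add_distrib, Finset.sum_const, hcard, nsmul_eq_mul,
                Finset.mul_sum]
              ring
          _ ≤ (N:ℝ)^2*a^2 + (k:ℝ)*(48*(N:ℝ)) + (N:ℝ) := by
              have hdiag : ∑ i ∈ F, ∑ j ∈ F, (if i = j then (1:ℝ) else 0) ≤ (N:ℝ) := by
                have hin : ∀ i ∈ F, ∑ j ∈ F, (if i = j then (1:ℝ) else 0) ≤ 1 := by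
                  intro i hi
                  rw [Finset.sum_ite_eq F i (fun _ => (1:ℝ)), if_pos hi]
                calc ∑ i ∈ F, ∑ j ∈ F, (if i = j then (1:ℝ) else 0) ≤ ∑ i ∈ F, (1:ℝ) :=
                      Finset.sum_le_sum hin
                  _ = (N:ℝ) := by rw [Finset.sum_const, hcard, nsmul_eq_mul, mul_one]
              have := mul_le_mul_of_nonneg_left hEsum hk0
              linarith
          _ ≤ (N:ℝ)^2*a^2 + Cc*N := by rw [hCc]; nlinarith [Nat.cast_nonneg (α := ℝ) N]
      -- Chung–Erdős and conclusion
      have hCE := chung_erdos volume F A hmA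
      have hUbox : (⋃ i ∈ F, A i) ⊆ box := iUnion₂_subset (fun n _ => hAbox n)
      have hUle : volume (⋃ i ∈ F, A i) ≤ 1 := hvbox ▸ measure_mono hUbox
      have hUfin : volume (⋃ i ∈ F, A i) ≠ ⊤ := (lt_of_le_of_lt hUle (by norm_num)).ne
      have hDfin : (∑ i ∈ F, ∑ j ∈ F, volume (A i ∩ A j)) ≠ ⊤ := by
        refine (ENNReal.sum_lt_top.2 (fun i _ => ENNReal.sum_lt_top.2 (fun j _ => ?_))).ne
        exact (hvAijfin i j).lt_top
      have hreal : Sr^2 ≤ (volume (⋃ i ∈ F, A i)).toReal * Dr := by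
        have h1 : ((∑ i ∈ F, volume (A i))^2).toReal = Sr^2 := by
          rw [ENNReal.toReal_pow, ENNReal.toReal_sum (fun i _ => hvAfin i)]
        have h2 : ((volume (⋃ i ∈ F, A i)) * ∑ i ∈ F, ∑ j ∈ F, volume (A i ∩ A j)).toReal
            = (volume (⋃ i ∈ F, A i)).toReal * Dr := by
          rw [ENNReal.toReal_mul]
          congr 1
          rw [ENNReal.toReal_sum (fun i _ => (ENNReal.sum_lt_top.2
            (fun j _ => (hvAijfin i j).lt_top)).ne)]
          exact Finset.sum_congr rfl (fun i _ =>
            ENNReal.toReal_sum (fun j _ => hvAijfin i j))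
        rw [← h1, ← h2]
        exact ENNReal.toReal_mono (ENNReal.mul_ne_top hUfin hDfin) hCE
      by_contra hcon
      push_neg at hcon
      have hPB : (volume (⋃ i ∈ F, A i)).toReal ≤ (volume B).toReal := by
        apply ENNReal.toReal_mono hBfin
        apply measure_mono
        apply iUnion₂_subset
        intro n hn
        rw [hF, Finset.mem_Ico] at hn
        exact subset_iUnion₂ (s := fun n (_ : m ≤ n) => A n) n hn.1
      have hDr0 : 0 ≤ Dr := Finset.sum_nonneg (fun i _ =>
        Finset.sum_nonneg (fun j _ => ENNReal.toReal_nonneg))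
      have hU1 : (volume (⋃ i ∈ F, A i)).toReal < 1 - ε := lt_of_le_of_lt hPB hcon
      have hsq : ((N:ℝ)*a - 2*(k:ℝ))^2 ≤ Sr^2 := by
        apply pow_le_pow_left₀ (by linarith) hSr_lb
      nlinarith [hreal, hU1, hDr0, hDr_ub, hN1]
    have h1le : (1:ℝ≥0∞) ≤ volume B := by
      by_contra hlt
      push_neg at hlt
      have htr : (volume B).toReal < 1 := by
        have := ENNReal.toReal_lt_toReal hBfin (by norm_num : (1:ℝ≥0∞) ≠ ⊤) |>.2 hlt
        simpa using this
      have htr0 : 0 ≤ (volume B).toReal := ENNReal.toReal_nonneg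
      have := hmain ((1 - (volume B).toReal)/2) (by linarith) (by linarith)
      linarith
    exact le_antisymm hBle h1le
  -- intersect over m
  show volume (⋂ m, ⋃ n, ⋃ (_ : m ≤ n), A n) = 1
  set B : ℕ → Set (Fin k → ℝ) := fun m => ⋃ n, ⋃ (_ : m ≤ n), A n with hB
  have hmB : ∀ m, MeasurableSet (B m) := fun m =>
    MeasurableSet.iUnion (fun n => MeasurableSet.iUnion (fun _ => hmA n))
  have hBbox : ∀ m, B m ⊆ box := fun m => iUnion₂_subset (fun n _ => hAbox n)
  have hnull : volume (⋃ m, box \ B m) = 0 := by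
    apply measure_iUnion_null
    intro m
    rw [measure_diff (hBbox m) (hmB m).nullMeasurableSet
      ((lt_of_le_of_lt (le_trans (measure_mono (hBbox m)) hvbox.le) (by norm_num)).ne)]
    rw [hvbox, hBm m, tsub_self]
  have hsubset : box \ (⋃ m, box \ B m) ⊆ ⋂ m, B m := by
    rintro x ⟨hxbox, hxn⟩
    rw [mem_iInter]
    intro m
    by_contra h
    exact hxn (mem_iUnion.2 ⟨m, hxbox, h⟩)
  have h1 : (1:ℝ≥0∞) ≤ volume (⋂ m, B m) := by
    have heq : volume (box \ ⋃ m, box \ B m) = 1 := by rw [measure_diff_null hnull, hvbox]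
    calc (1:ℝ≥0∞) = volume (box \ ⋃ m, box \ B m) := heq.symm
      _ ≤ volume (⋂ m, B m) := measure_mono hsubset
  have h2 : volume (⋂ m, B m) ≤ 1 := by
    calc volume (⋂ m, B m) ≤ volume (B 0) := measure_mono (iInter_subset _ 0)
      _ = 1 := hBm 0
  exact le_antisymm h2 h1

theorem stmt11 (l k : ℕ) (hk : 2 ≤ k) (ψ : ℕ → ℝ)
    (hmono : ∀ p q : ℕ, p ≤ q → ψ q ≤ ψ p) (hψ : ∀ q, 0 < ψ q ∧ ψ q ≤ 1)
    (hφ : ∀ q : ℕ, (q : ℝ) * ψ q ≤ 1)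
    (s : ℝ) (hs : 0 < s) (hsk : s ≤ k)
    (α : Fin l → ℝ) (hα : memW l ψ α)
    (hliminf : 0 < Filter.liminf
      (fun q : ℕ => ENNReal.ofReal ((q : ℝ) ^ ((k : ℝ) - s) * ((q : ℝ) * ψ q) ^ s))
      Filter.atTop) :
    volume {x : Fin k → ℝ |
        memW k (fun q =>
          (if ∀ i, nid ((q : ℝ) * α i) < (q : ℝ) * ψ q then ψ q else 0) ^ (s / k)) x} = 1 := by
  classical
  have hk0 : (0:ℝ) < k := by exact_mod_cast (by omega : 0 < k)
  have hkne : (k:ℝ) ≠ 0 := hk0.ne'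
  -- step 1: extract c
  obtain ⟨c, hc0, N₀, hN₀⟩ : ∃ c : ℝ, 0 < c ∧ ∃ N₀ : ℕ, ∀ q : ℕ, N₀ ≤ q →
      c ≤ (q:ℝ)^((k:ℝ)-s) * ((q:ℝ)*ψ q)^s := by
    set L := Filter.liminf
      (fun q : ℕ => ENNReal.ofReal ((q : ℝ) ^ ((k : ℝ) - s) * ((q : ℝ) * ψ q) ^ s))
      Filter.atTop with hL
    have hXnn : ∀ q : ℕ, 0 ≤ (q:ℝ)^((k:ℝ)-s) * ((q:ℝ)*ψ q)^s := by
      intro q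
      apply mul_nonneg (Real.rpow_nonneg (Nat.cast_nonneg q) _)
        (Real.rpow_nonneg ?_ _)
      exact mul_nonneg (Nat.cast_nonneg q) (hψ q).1.le
    obtain ⟨ε, hε0, hεtop, hεL⟩ : ∃ ε : ℝ≥0∞, 0 < ε ∧ ε ≠ ⊤ ∧ ε < L := by
      by_cases htop : L = ⊤
      · exact ⟨1, by norm_num, by norm_num, by rw [htop]; exact ENNReal.one_lt_top⟩
      · refine ⟨L/2, ENNReal.half_pos hliminf.ne', ?_, ENNReal.half_lt_self hliminf.ne' htop⟩
        exact (ENNReal.div_lt_top htop (by norm_num)).ne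
    have hev := Filter.eventually_lt_of_lt_liminf hεL
    rw [eventually_atTop] at hev
    obtain ⟨N₀, hN₀⟩ := hev
    refine ⟨ε.toReal, ENNReal.toReal_pos hε0.ne' hεtop, N₀, fun q hq => ?_⟩
    have h1 := hN₀ q hq
    have h2 : ε.toReal ≤ (ENNReal.ofReal ((q:ℝ)^((k:ℝ)-s) * ((q:ℝ)*ψ q)^s)).toReal := by
      exact ENNReal.toReal_mono ENNReal.ofReal_ne_top h1.le
    rwa [ENNReal.toReal_ofReal (hXnn q)] at h2
  -- step 2: δ
  set c1 : ℝ := c ^ (1/(k:ℝ)) with hc1def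
  have hc1 : 0 < c1 := Real.rpow_pos_of_pos hc0 _
  set δ : ℝ := min c1 1 / 2 with hδdef
  have hδ0 : 0 < δ := by rw [hδdef]; positivity
  have hδhalf : δ ≤ 1/2 := by
    rw [hδdef]
    have : min c1 1 ≤ 1 := min_le_right _ _
    linarith
  have h2δ : 2*δ ≤ c1 := by
    rw [hδdef]
    have : min c1 1 ≤ c1 := min_le_left _ _
    linarith
  -- step 3: key rpow bound
  have hkey : ∀ q : ℕ, N₀ ≤ q → 1 ≤ q → c1 ≤ (q:ℝ) * ψ q ^ (s/(k:ℝ)) := by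
    intro q hqN hq1
    have hq0 : (0:ℝ) < q := by exact_mod_cast hq1
    have hψ0 := (hψ q).1
    have hX := hN₀ q hqN
    have e1 : ((q:ℝ) * ψ q)^s = (q:ℝ)^s * ψ q ^ s := Real.mul_rpow hq0.le hψ0.le
    rw [e1] at hX
    have e2 : (q:ℝ)^((k:ℝ)-s) * ((q:ℝ)^s * ψ q^s) = (q:ℝ)^(k:ℝ) * ψ q^s := by
      rw [← mul_assoc, ← Real.rpow_add hq0]
      ring_nf
    rw [e2] at hX
    have h3 := Real.rpow_le_rpow hc0.le hX (by positivity : (0:ℝ) ≤ 1/(k:ℝ))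
    have e3 : ((q:ℝ)^(k:ℝ) * ψ q^s)^(1/(k:ℝ)) = (q:ℝ) * ψ q^(s/(k:ℝ)) := by
      rw [Real.mul_rpow (by positivity) (by positivity)]
      rw [← Real.rpow_mul hq0.le, ← Real.rpow_mul hψ0.le]
      rw [mul_one_div, div_self hkne, Real.rpow_one, mul_one_div]
    rw [e3] at h3
    exact h3
  -- step 4: subsequence
  set Gq := {q : ℕ | 0 < q ∧ ∃ p : Fin l → ℤ, ∀ i, |α i - (p i:ℝ)/(q:ℝ)| < ψ q} with hGq
  have hGinf : Gq.Infinite := hα.2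
  set G' := Gq \ Iic (max N₀ 1) with hG'
  have hG'inf : G'.Infinite := hGinf.diff (finite_Iic _)
  have hex : ∀ b : ℕ, ∃ q, q ∈ G' ∧ b < q := by
    intro b
    obtain ⟨q, hq⟩ := (hG'inf.diff (finite_Iic b)).nonempty
    exact ⟨q, hq.1, by simpa using hq.2⟩
  set u : ℕ → ℕ := fun n => Nat.rec (Classical.choose (hex 0))
    (fun n prev => Classical.choose (hex (2^(n+1) * prev))) n with hu
  have hu0 : u 0 ∈ G' ∧ 0 < u 0 := Classical.choose_spec (hex 0)
  have huS : ∀ n, u (n+1) ∈ G' ∧ 2^(n+1) * u n < u (n+1) :=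
    fun n => Classical.choose_spec (hex (2^(n+1) * u n))
  have huG : ∀ n, u n ∈ G' := by
    intro n
    cases n with
    | zero => exact hu0.1
    | succ m => exact (huS m).1
  have huGq : ∀ n, u n ∈ Gq := fun n => (huG n).1
  have hu1 : ∀ n, 1 ≤ u n := fun n => (huGq n).1
  have huN : ∀ n, max N₀ 1 < u n := by
    intro n
    have := (huG n).2
    simpa using this
  have humono : StrictMono u := by
    apply strictMono_nat_of_lt_succ
    intro n
    calc u n ≤ 2^(n+1) * u n := Nat.le_mul_of_pos_left _ (Nat.pow_pos (by norm_num))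
      _ < u (n+1) := (huS n).2
  have hu2nat : ∀ n, 2^n ≤ u n := by
    intro n
    induction n with
    | zero => simpa using hu1 0
    | succ m ih =>
      have h1 : 2^(m+1) * 1 ≤ 2^(m+1) * u m := Nat.mul_le_mul_left _ (hu1 m)
      have := (huS m).2
      omega
  have hu4nat : ∀ i j, i < j → u i * 2^j ≤ u j := by
    intro i j hij
    have hj : j - 1 + 1 = j := by omega
    have h1 : u i ≤ u (j-1) := humono.monotone (by omega)
    have h2 := (huS (j-1)).2
    rw [hj] at h2
    calc u i * 2^j = 2^j * u i := Nat.mul_comm _ _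
      _ ≤ 2^j * u (j-1) := Nat.mul_le_mul_left _ h1
      _ ≤ u j := le_of_lt h2
  have hcore := core k (by omega) hδ0 hδhalf u hu1
    (fun n => by exact_mod_cast hu2nat n)
    (fun i j hij => by exact_mod_cast hu4nat i j hij)
  -- step 5: conclude
  set Φ : ℕ → ℝ := fun q =>
    (if ∀ i, nid ((q : ℝ) * α i) < (q : ℝ) * ψ q then ψ q else 0) ^ (s / (k:ℝ)) with hΦ
  set box : Set (Fin k → ℝ) := Set.pi univ (fun _ : Fin k => Icc (0:ℝ) 1) with hbox
  have hvbox : volume box = 1 := by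
    rw [hbox, volume_pi_pi]
    simp [Real.volume_Icc]
  -- Φ is large on u n
  have hΦbig : ∀ n, δ / (u n : ℝ) < Φ (u n) := by
    intro n
    set q := u n with hq
    have hq1 : 1 ≤ q := hu1 n
    have hq0 : (0:ℝ) < q := by exact_mod_cast hq1
    obtain ⟨hqpos, p, hp⟩ := huGq n
    have hif : ∀ i, nid ((q:ℝ) * α i) < (q:ℝ) * ψ q := by
      intro i
      calc nid ((q:ℝ) * α i) ≤ |(q:ℝ) * α i - (p i : ℝ)| := nid_le _ _
        _ = (q:ℝ) * |α i - (p i : ℝ)/(q:ℝ)| := by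
            rw [← abs_of_pos hq0, ← abs_mul]
            congr 1
            field_simp
            rw [abs_of_pos hq0]; ring
        _ < (q:ℝ) * ψ q := by
            apply mul_lt_mul_of_pos_left (hp i) hq0
    have hqN : N₀ ≤ q := le_trans (le_max_left _ _) (le_of_lt (huN n))
    have h1 := hkey q hqN hq1
    have hΦeq : Φ q = ψ q ^ (s/(k:ℝ)) := by rw [hΦ]; simp only [if_pos hif]
    rw [hΦeq]
    rw [div_lt_iff₀ hq0]
    have h2 : c1 ≤ ψ q ^ (s/(k:ℝ)) * q := by rw [mul_comm]; exact h1
    linarith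
  -- inclusion
  have hincl : (⋂ m, ⋃ n, ⋃ (_ : m ≤ n),
      Set.pi univ (fun _ : Fin k => {x : ℝ | nid ((u n:ℝ) * x) < δ} ∩ Icc 0 1))
      ⊆ {x : Fin k → ℝ | memW k Φ x} := by
    intro x hx
    have hx' : ∀ m, ∃ n, m ≤ n ∧ x ∈ Set.pi univ
        (fun _ : Fin k => {x : ℝ | nid ((u n:ℝ) * x) < δ} ∩ Icc 0 1) := by
      intro m
      have := mem_iInter.1 hx m
      rw [mem_iUnion] at this
      obtain ⟨n, hn⟩ := this
      rw [mem_iUnion] at hn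
      obtain ⟨hmn, hxn⟩ := hn
      exact ⟨n, hmn, hxn⟩
    constructor
    · obtain ⟨n, _, hxn⟩ := hx' 0
      intro i
      exact ((hxn i (mem_univ i)).2)
    · set S := {n : ℕ | x ∈ Set.pi univ
        (fun _ : Fin k => {x : ℝ | nid ((u n:ℝ) * x) < δ} ∩ Icc 0 1)} with hS
      have hSinf : S.Infinite := by
        by_contra hfin
        rw [Set.not_infinite] at hfin
        obtain ⟨M, hM⟩ := hfin.bddAbove
        obtain ⟨n, hn, hxn⟩ := hx' (M+1)
        have := hM hxn
        omega
      have himg : u '' S ⊆ {q : ℕ | 0 < q ∧ ∃ p : Fin k → ℤ,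
          ∀ i, |x i - (p i : ℝ)/(q:ℝ)| < Φ q} := by
        rintro q ⟨n, hnS, rfl⟩
        have hq1 : 1 ≤ u n := hu1 n
        have hq0 : (0:ℝ) < (u n : ℝ) := by exact_mod_cast hq1
        refine ⟨hq1, fun j => round ((u n : ℝ) * x j), fun j => ?_⟩
        have hxj := (hnS j (mem_univ j)).1
        have heq : x j - (round ((u n : ℝ) * x j) : ℝ)/(u n : ℝ)
            = ((u n : ℝ) * x j - round ((u n : ℝ) * x j))/(u n : ℝ) := by
          field_simp
        rw [heq, abs_div, abs_of_pos hq0]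
        have h1 : |(u n : ℝ) * x j - round ((u n : ℝ) * x j)| < δ := hxj
        calc |(u n : ℝ) * x j - (round ((u n : ℝ) * x j) : ℝ)| / (u n : ℝ)
            < δ / (u n : ℝ) := div_lt_div_of_pos_right h1 hq0
          _ < Φ (u n) := hΦbig n
      exact ((hSinf.image (humono.injective.injOn)).mono himg)
  apply le_antisymm
  · refine le_trans (measure_mono ?_) (le_of_eq hvbox)
    intro x hx
    show x ∈ box
    rw [hbox, mem_univ_pi]
    exact fun i => hx.1 i
  · rw [← hcore]
    exact measure_mono hincl
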